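/- Let N ≥ 1 and let σ, π ∈ S_N with σ(1)=1 be such that no pair of couples has opposite orientation, i.e., for all i, j ∈ {1,…,N}: (σ(τ(j)) − σ(i))·(π(j) − π(i)) ≥ 0 and (σ(j) − σ(i))·(π(j) − π(τ⁻¹(i))) ≥ 0. Then either (σ,π) = (σ̃, π̃) or (σ,π) = (σ̃∘τ∘I, π̃∘I). -/

import Mathlib

/-- The criss-cross permutation σ̃ of {1,…,N}, written 0-indexed: position `i`
(1-indexed `i+1`) is sent to `2*i` when `2*i < N` (1-indexed: `σ̃(j)=2j-1` for
`j ≤ (N+1)/2`) and to `2*(N-1-i)+1` otherwise (1-indexed: `σ̃(j)=2N-2j+2` for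
`j > (N+1)/2`). -/
noncomputable def sigmaTilde (N : ℕ) : Equiv.Perm (Fin N) :=
  Equiv.ofBijective
    (fun i => if h : 2 * i.val < N then ⟨2 * i.val, h⟩
      else ⟨2 * (N - 1 - i.val) + 1, by have := i.isLt; omega⟩)
    (Finite.injective_iff_bijective.mp (by
      intro a b hab
      have ha := a.isLt; have hb := b.isLt
      by_cases h1 : 2 * a.val < N <;> by_cases h2 : 2 * b.val < N <;>
        simp only [h1, h2, dif_pos, dif_neg, not_false_iff, Fin.mk.injEq, Fin.ext_iff] at hab ⊢ <;>
        omega))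

/-- The criss-cross permutation π̃ = σ̃ ∘ I, where `I = Fin.revPerm` is the inversion
`I(j) = N+1-j` (0-indexed: `i ↦ N-1-i`).  Here `(f * g) i = f (g i)`. -/
noncomputable def piTilde (N : ℕ) : Equiv.Perm (Fin N) := sigmaTilde N * Fin.revPerm


namespace CrissCrossAux

/-- expected position of value `v` in `c` (0-indexed), `N = n+1`. -/
def xv (n v : ℕ) : ℕ := if v = 0 then n else if v % 2 = 0 then v / 2 - 1 else n - 1 - v / 2

/-- expected position of value `v` in `b`. -/
def yv (n v : ℕ) : ℕ := if v % 2 = 0 then n - v / 2 else v / 2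

def X (n v : ℕ) : Fin (n+1) := ⟨xv n v % (n+1), Nat.mod_lt _ (Nat.succ_pos n)⟩
def Y (n v : ℕ) : Fin (n+1) := ⟨yv n v % (n+1), Nat.mod_lt _ (Nat.succ_pos n)⟩

lemma xv_lt {n v : ℕ} (hv : v ≤ n) : xv n v < n + 1 := by unfold xv; split_ifs <;> (try contradiction) <;> omega
lemma yv_lt {n v : ℕ} (hv : v ≤ n) : yv n v < n + 1 := by unfold yv; split_ifs <;> (try contradiction) <;> omega

lemma X_val {n v : ℕ} (hv : v ≤ n) : (X n v).val = xv n v := Nat.mod_eq_of_lt (xv_lt hv)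
lemma Y_val {n v : ℕ} (hv : v ≤ n) : (Y n v).val = yv n v := Nat.mod_eq_of_lt (yv_lt hv)

lemma val_one {n : ℕ} (hn : 1 ≤ n) : ((1 : Fin (n+1))).val = 1 := by
  rw [Fin.val_one']; exact Nat.mod_eq_of_lt (by omega)

lemma mk_add_one {n a : ℕ} (ha : a < n) (h' : a < n + 1) :
    (⟨a, h'⟩ : Fin (n+1)) + 1 = ⟨a+1, by omega⟩ := by
  apply Fin.ext
  rw [Fin.val_add, val_one (by omega)]
  show (a + 1) % (n+1) = a + 1
  exact Nat.mod_eq_of_lt (by omega)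

lemma mk_top_add_one {n : ℕ} (h' : n < n + 1) : (⟨n, h'⟩ : Fin (n+1)) + 1 = ⟨0, by omega⟩ := by
  apply Fin.ext
  rcases Nat.eq_zero_or_pos n with rfl | hn
  · rfl
  · rw [Fin.val_add, val_one (by omega)]
    show (n + 1) % (n+1) = 0
    simp [Nat.mod_self]

/-- `X n (2t) + 1 = ⟨t⟩`. -/
lemma X_even_add_one {n t : ℕ} (ht : 2*t ≤ n) : X n (2*t) + 1 = ⟨t, by omega⟩ := by
  rcases Nat.eq_zero_or_pos t with rfl | htpos
  · have : X n (2*0) = ⟨n, by omega⟩ := Fin.ext (by rw [X_val (by omega)]; simp [xv])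
    rw [this, mk_top_add_one]
  · have : X n (2*t) = ⟨t - 1, by omega⟩ := by
      apply Fin.ext
      simp only [Fin.val_mk]
      rw [X_val (by omega)]
      unfold xv; split_ifs <;> (try contradiction) <;> omega
    rw [this, mk_add_one (n := n) (a := t-1) (by omega)]
    exact Fin.ext (by show t - 1 + 1 = t; omega)

/-- sign lemmas -/
lemma prodA {A B C D : ℤ} (h : (A - B) * (C - D) ≥ 0) (h2 : A < B) : C ≤ D := by
  by_contra hlt
  push_neg at hlt
  have := mul_neg_of_neg_of_pos (by linarith : A - B < 0) (by linarith : C - D > 0)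
  linarith

lemma prodB {A B C D : ℤ} (h : (A - B) * (C - D) ≥ 0) (h2 : D < C) : B ≤ A := by
  by_contra hlt
  push_neg at hlt
  have := mul_neg_of_neg_of_pos (by linarith : A - B < 0) (by linarith : C - D > 0)
  linarith

lemma prodC {A B C D : ℤ} (h : (A - B) * (C - D) ≥ 0) (h2 : C < D) : A ≤ B := by
  by_contra hlt
  push_neg at hlt
  have := mul_neg_of_pos_of_neg (by linarith : A - B > 0) (by linarith : C - D < 0)
  linarith

lemma prodD {A B C D : ℤ} (h : (A - B) * (C - D) ≥ 0) (h2 : B < A) : D ≤ C := by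
  by_contra hlt
  push_neg at hlt
  have := mul_neg_of_pos_of_neg (by linarith : A - B > 0) (by linarith : C - D < 0)
  linarith

/-- if `f (pos w) = w` for all `w ≤ V` and `p` avoids all these positions then `f p > V`. -/
lemma lowb {n : ℕ} {f : Fin (n+1) → Fin (n+1)} (hf : Function.Injective f) {V : ℕ}
    (pos : ℕ → Fin (n+1)) (IH : ∀ w, w ≤ V → (f (pos w)).val = w)
    (p : Fin (n+1)) (hp : ∀ w, w ≤ V → pos w ≠ p) : V < (f p).val := by
  by_contra h
  push_neg at h
  exact hp _ h (hf (Fin.val_injective (IH _ h)))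

/-- positions of `b`-values `≤ V` (V even) coincide with positions of `c`-values. -/
lemma YtoX {n V w : ℕ} (hV2 : V % 2 = 0) (hVn : V ≤ n) (hw : w ≤ V) :
    ∃ w', w' ≤ V ∧ X n w' = Y n w := by
  rcases Nat.eq_zero_or_pos w with rfl | hwpos
  · exact ⟨0, by omega, Fin.ext (by rw [X_val (by omega), Y_val (by omega)]; simp [xv, yv])⟩
  rcases Nat.even_or_odd w with he | ho
  · have h2 : w % 2 = 0 := Nat.even_iff.mp he
    refine ⟨w - 1, by omega, Fin.ext ?_⟩
    rw [X_val (by omega), Y_val (by omega)]; unfold xv yv; split_ifs <;> (try contradiction) <;> omega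
  · have h2 : w % 2 = 1 := Nat.odd_iff.mp ho
    refine ⟨w + 1, by omega, Fin.ext ?_⟩
    rw [X_val (by omega), Y_val (by omega)]; unfold xv yv; split_ifs <;> (try contradiction) <;> omega

lemma XtoY {n V w : ℕ} (hV2 : V % 2 = 0) (hVn : V ≤ n) (hw : w ≤ V) :
    ∃ w', w' ≤ V ∧ Y n w' = X n w := by
  rcases Nat.eq_zero_or_pos w with rfl | hwpos
  · exact ⟨0, by omega, Fin.ext (by rw [X_val (by omega), Y_val (by omega)]; simp [xv, yv])⟩
  rcases Nat.even_or_odd w with he | ho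
  · have h2 : w % 2 = 0 := Nat.even_iff.mp he
    refine ⟨w - 1, by omega, Fin.ext ?_⟩
    rw [X_val (by omega), Y_val (by omega)]; unfold xv yv; split_ifs <;> (try contradiction) <;> omega
  · have h2 : w % 2 = 1 := Nat.odd_iff.mp ho
    refine ⟨w + 1, by omega, Fin.ext ?_⟩
    rw [X_val (by omega), Y_val (by omega)]; unfold xv yv; split_ifs <;> (try contradiction) <;> omega

end CrissCrossAux

section Part2
namespace CrissCrossAux

variable {n : ℕ} {c b : Fin (n+1) → Fin (n+1)}

lemma ne_X {n w : ℕ} (hw : w ≤ n) {p : Fin (n+1)} (h : xv n w ≠ p.val) : X n w ≠ p :=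
  fun heq => h (by rw [← X_val hw, heq])

lemma ne_Y {n w : ℕ} (hw : w ≤ n) {p : Fin (n+1)} (h : yv n w ≠ p.val) : Y n w ≠ p :=
  fun heq => h (by rw [← Y_val hw, heq])


/-- `X n (2t+1) + 1 = Y n (2t)` (both are about position `n-t`). -/
lemma eq1 {t : ℕ} (ht : 2*t+1 ≤ n) : X n (2*t+1) + 1 = Y n (2*t) := by
  have h1 : X n (2*t+1) = ⟨n-1-t, by omega⟩ := Fin.ext (by
    simp only [Fin.val_mk]; rw [X_val (by omega)]; unfold xv
    split_ifs <;> (try contradiction) <;> omega)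
  rw [h1, mk_add_one (n := n) (a := n-1-t) (by omega)]
  exact Fin.ext (by
    simp only [Fin.val_mk]; rw [Y_val (by omega)]; unfold yv
    split_ifs <;> (try contradiction) <;> omega)

/-- `X n (2t) + 1 = Y n (2t+1)` (both about position `t`). -/
lemma eq2 {t : ℕ} (ht : 2*t+1 ≤ n) : X n (2*t) + 1 = Y n (2*t+1) := by
  rw [X_even_add_one (by omega)]
  exact Fin.ext (by
    simp only [Fin.val_mk]; rw [Y_val (by omega)]; unfold yv
    split_ifs <;> (try contradiction) <;> omega)

/-- `X n (2t+2) = Y n (2t+1)` (position `t`). -/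
lemma eq3 {t : ℕ} (ht : 2*t+2 ≤ n) : X n (2*t+2) = Y n (2*t+1) := by
  apply Fin.ext
  rw [X_val (by omega), Y_val (by omega)]; unfold xv yv
  split_ifs <;> (try contradiction) <;> omega

/-- `Y n (2t+2) = X n (2t+1)` (position `n-1-t`). -/
lemma eq4 {t : ℕ} (ht : 2*t+2 ≤ n) : Y n (2*t+2) = X n (2*t+1) := by
  apply Fin.ext
  rw [X_val (by omega), Y_val (by omega)]; unfold xv yv
  split_ifs <;> (try contradiction) <;> omega

lemma stepE (hc : Function.Bijective c) (hb : Function.Bijective b)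
    (H1 : ∀ i j, (((c j).val : ℤ) - (c i).val) * (((b j).val : ℤ) - (b (i+1)).val) ≥ 0)
    (H2 : ∀ i j, (((c j).val : ℤ) - (c i).val) * (((b (j+1)).val : ℤ) - (b i).val) ≥ 0)
    {t : ℕ} (ht : 2*t+1 ≤ n)
    (IH : ∀ w, w ≤ 2*t → (c (X n w)).val = w ∧ (b (Y n w)).val = w) :
    (c (X n (2*t+1))).val = 2*t+1 ∧ (b (Y n (2*t+1))).val = 2*t+1 := by
  obtain ⟨x, hx⟩ := hc.surjective ⟨2*t+1, by omega⟩
  obtain ⟨y, hy⟩ := hb.surjective ⟨2*t+1, by omega⟩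
  have hxv : (c x).val = 2*t+1 := by rw [hx]
  have hyv : (b y).val = 2*t+1 := by rw [hy]
  have hb2t : (b (Y n (2*t))).val = 2*t := (IH (2*t) le_rfl).2
  have hc2t : (c (X n (2*t))).val = 2*t := (IH (2*t) le_rfl).1
  -- (C) : x = X n (2t+1)
  have hxeq : x = X n (2*t+1) := by
    by_contra hne
    have hcge : 2*t+1 < (c (X n (2*t+1))).val := by
      have hlow : 2*t < (c (X n (2*t+1))).val := by
        refine lowb hc.injective (X n) (fun w hw => (IH w hw).1) _ ?_
        intro w hw
        apply ne_X (by omega)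
        have h2 : (X n (2*t+1)).val = xv n (2*t+1) := X_val (by omega)
        rw [h2]
        unfold xv
        split_ifs <;> (try contradiction) <;> omega
      have hne2 : (c (X n (2*t+1))).val ≠ 2*t+1 := by
        intro h
        exact hne (hc.injective (Fin.val_injective (by rw [hxv, h]))).symm
      omega
    have key1 := H1 (X n (2*t+1)) x
    rw [eq1 ht] at key1
    have hble : (b x).val ≤ 2*t := by
      have := prodA key1 (by omega)
      omega
    have hYx : Y n ((b x).val) = x :=
      hb.injective (Fin.val_injective (by rw [(IH _ hble).2]))
    obtain ⟨w', hw', hXY⟩ := YtoX (n := n) (V := 2*t) (w := (b x).val) (by omega) (by omega) hble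
    rw [hYx] at hXY
    have := (IH w' hw').1
    rw [hXY] at this
    omega
  -- (D) : y = Y n (2t+1)
  have hyeq : y = Y n (2*t+1) := by
    by_contra hne
    have hbt : 2*t+1 < (b (Y n (2*t+1))).val := by
      have hlow : 2*t < (b (Y n (2*t+1))).val := by
        refine lowb hb.injective (Y n) (fun w hw => (IH w hw).2) _ ?_
        intro w hw
        apply ne_Y (by omega)
        have h2 : (Y n (2*t+1)).val = yv n (2*t+1) := Y_val (by omega)
        rw [h2]
        unfold yv
        split_ifs <;> (try contradiction) <;> omega
      have hne2 : (b (Y n (2*t+1))).val ≠ 2*t+1 := by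
        intro h
        exact hne (hb.injective (Fin.val_injective (by rw [hyv, h]))).symm
      omega
    have key2 := H2 y (X n (2*t))
    rw [eq2 ht] at key2
    have hcle : (c y).val ≤ 2*t := by
      have := prodB key2 (by omega)
      omega
    have hXy : X n ((c y).val) = y :=
      hc.injective (Fin.val_injective (by rw [(IH _ hcle).1]))
    obtain ⟨w', hw', hYX⟩ := XtoY (n := n) (V := 2*t) (w := (c y).val) (by omega) (by omega) hcle
    rw [hXy] at hYX
    have := (IH w' hw').2
    rw [hYX] at this
    omega
  rw [← hxeq, ← hyeq]
  exact ⟨hxv, hyv⟩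

lemma stepO (hc : Function.Bijective c) (hb : Function.Bijective b)
    (H1 : ∀ i j, (((c j).val : ℤ) - (c i).val) * (((b j).val : ℤ) - (b (i+1)).val) ≥ 0)
    (H2 : ∀ i j, (((c j).val : ℤ) - (c i).val) * (((b (j+1)).val : ℤ) - (b i).val) ≥ 0)
    {t : ℕ} (ht : 2*t+2 ≤ n)
    (IH : ∀ w, w ≤ 2*t+1 → (c (X n w)).val = w ∧ (b (Y n w)).val = w) :
    (c (X n (2*t+2))).val = 2*t+2 ∧ (b (Y n (2*t+2))).val = 2*t+2 := by
  obtain ⟨x, hx⟩ := hc.surjective ⟨2*t+2, by omega⟩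
  obtain ⟨y, hy⟩ := hb.surjective ⟨2*t+2, by omega⟩
  have hxv : (c x).val = 2*t+2 := by rw [hx]
  have hyv : (b y).val = 2*t+2 := by rw [hy]
  have hc2t : (c (X n (2*t))).val = 2*t := (IH (2*t) (by omega)).1
  have hcodd : (c (X n (2*t+1))).val = 2*t+1 := (IH (2*t+1) le_rfl).1
  have hbodd : (b (Y n (2*t+1))).val = 2*t+1 := (IH (2*t+1) le_rfl).2
  -- b at position t = X n (2t+2):
  have hbY : (b (X n (2*t+2))).val = 2*t+1 := by rw [eq3 ht]; exact hbodd
  -- c at position t is > 2t+1: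
  have hct : 2*t+1 < (c (X n (2*t+2))).val := by
    refine lowb hc.injective (X n) (fun w hw => (IH w hw).1) _ ?_
    intro w hw
    apply ne_X (by omega)
    have h2 : (X n (2*t+2)).val = xv n (2*t+2) := X_val (by omega)
    rw [h2]
    unfold xv
    split_ifs <;> (try contradiction) <;> omega
  -- (A) : y = Y n (2t+2)
  have hyeq : y = Y n (2*t+2) := by
    by_contra hne
    set u : Fin (n+1) := y - 1 with hu
    have hu1 : u + 1 = y := sub_add_cancel y 1
    have keyA1 := H2 (X n (2*t+2)) u
    rw [hu1] at keyA1
    have hcu : 2*t+2 ≤ (c u).val := by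
      have := prodB keyA1 (by omega)
      omega
    have hbig : 2*t+2 < (b (Y n (2*t+2))).val := by
      have hlow : 2*t+1 < (b (Y n (2*t+2))).val := by
        refine lowb hb.injective (Y n) (fun w hw => (IH w hw).2) _ ?_
        intro w hw
        apply ne_Y (by omega)
        have h2 : (Y n (2*t+2)).val = yv n (2*t+2) := Y_val (by omega)
        rw [h2]
        unfold yv
        split_ifs <;> (try contradiction) <;> omega
      have hne2 : (b (Y n (2*t+2))).val ≠ 2*t+2 := by
        intro h
        exact hne (hb.injective (Fin.val_injective (by rw [hyv, h]))).symm
      omega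
    have keyA2 := H2 (Y n (2*t+2)) u
    rw [hu1] at keyA2
    have hcY : (c (Y n (2*t+2))).val = 2*t+1 := by rw [eq4 ht]; exact hcodd
    have : (c u).val ≤ 2*t+1 := by
      have := prodC keyA2 (by omega)
      omega
    omega
  have hyY : (b (Y n (2*t+2))).val = 2*t+2 := by rw [← hyeq]; exact hyv
  -- (B) : x = X n (2t+2)
  have hxeq : x = X n (2*t+2) := by
    by_contra hne
    -- b x is large
    have hbx1 : 2*t+1 ≤ (b x).val := by
      have keyB1 := H1 (X n (2*t)) x
      rw [eq2 (by omega)] at keyB1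
      have := prodD keyB1 (by omega)
      omega
    have hbxne1 : (b x).val ≠ 2*t+1 := by
      intro h
      have : x = Y n (2*t+1) := hb.injective (Fin.val_injective (by rw [h, hbodd]))
      rw [← eq3 ht] at this
      exact hne this
    have hbxne2 : (b x).val ≠ 2*t+2 := by
      intro h
      have hxy : x = Y n (2*t+2) := hb.injective (Fin.val_injective (by rw [h, hyY]))
      rw [eq4 ht] at hxy
      rw [hxy] at hxv
      omega
    have hbx : 2*t+2 < (b x).val := by omega
    have hP : (n-2-t) < n + 1 := by omega
    set P : Fin (n+1) := ⟨n-2-t, hP⟩ with hPdef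
    by_cases hcase : x = P
    · have hx1 : x + 1 = Y n (2*t+2) := by
        rw [hcase, hPdef, mk_add_one (n := n) (a := n-2-t) (by omega)]
        apply Fin.ext
        simp only [Fin.val_mk]
        rw [Y_val (by omega)]; unfold yv
        split_ifs <;> (try contradiction) <;> omega
      have keyB2 := H2 (X n (2*t+2)) x
      rw [hx1] at keyB2
      have hcXle : (c (X n (2*t+2))).val ≤ 2*t+2 := by
        have := prodB keyB2 (by omega)
        omega
      have hcXeq : (c (X n (2*t+2))).val = 2*t+2 := by omega
      exact hne (hc.injective (Fin.val_injective (by rw [hxv, hcXeq]))).symm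
    · have hcbig : 2*t+2 < (c P).val := by
        have hlow : 2*t+1 < (c P).val := by
          refine lowb hc.injective (X n) (fun w hw => (IH w hw).1) _ ?_
          intro w hw
          apply ne_X (by omega)
          rw [hPdef]
          simp only [Fin.val_mk]
          unfold xv
          split_ifs <;> (try contradiction) <;> omega
        have hne2 : (c P).val ≠ 2*t+2 := by
          intro h
          exact hcase (hc.injective (Fin.val_injective (by rw [hxv, h]))).symm
        omega
      have keyB3 := H1 P x
      have hstep : P + 1 = Y n (2*t+2) := by
        rw [hPdef, mk_add_one (n := n) (a := n-2-t) (by omega)]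
        apply Fin.ext
        simp only [Fin.val_mk]
        rw [Y_val (by omega)]; unfold yv
        split_ifs <;> (try contradiction) <;> omega
      rw [hstep] at keyB3
      have : (b x).val ≤ 2*t+2 := by
        have := prodA keyB3 (by omega)
        omega
      omega
  rw [← hxeq, ← hyeq]
  exact ⟨hxv, hyv⟩

lemma key (hc : Function.Bijective c) (hb : Function.Bijective b)
    (hc0 : c (Fin.last n) = 0) (hb0 : b (Fin.last n) = 0)
    (H1 : ∀ i j, (((c j).val : ℤ) - (c i).val) * (((b j).val : ℤ) - (b (i+1)).val) ≥ 0)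
    (H2 : ∀ i j, (((c j).val : ℤ) - (c i).val) * (((b (j+1)).val : ℤ) - (b i).val) ≥ 0) :
    ∀ v, v ≤ n → (c (X n v)).val = v ∧ (b (Y n v)).val = v := by
  intro v
  induction v using Nat.strong_induction_on with
  | _ v IH =>
    intro hv
    rcases Nat.eq_zero_or_pos v with rfl | hpos
    · constructor
      · have hX : X n 0 = Fin.last n := Fin.ext (by
          rw [X_val (by omega)]; simp [xv, Fin.val_last])
        rw [hX, hc0, Fin.val_zero]
      · have hY : Y n 0 = Fin.last n := Fin.ext (by
          rw [Y_val (by omega)]; simp [yv, Fin.val_last])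
        rw [hY, hb0, Fin.val_zero]
    · rcases Nat.even_or_odd v with he | ho
      · obtain ⟨t, rfl⟩ : ∃ t, v = 2*t+2 := by
          obtain ⟨k, hk⟩ := he; exact ⟨k - 1, by omega⟩
        exact stepO hc hb H1 H2 (by omega) (fun w hw => IH w (by omega) (by omega))
      · obtain ⟨t, rfl⟩ : ∃ t, v = 2*t+1 := by
          obtain ⟨k, hk⟩ := ho; exact ⟨k, by omega⟩
        exact stepE hc hb H1 H2 (by omega) (fun w hw => IH w (by omega) (by omega))

end CrissCrossAux
end Part2

section Part3
namespace CrissCrossAux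

variable {n : ℕ}

lemma st_even (v : ℕ) (hv : v ≤ n) (h2 : v % 2 = 0) (h' : v/2 < n+1) :
    sigmaTilde (n+1) ⟨v/2, h'⟩ = ⟨v, by omega⟩ := by
  show (if h : 2 * (v/2) < n+1 then (⟨2*(v/2), h⟩ : Fin (n+1))
    else ⟨2 * ((n+1) - 1 - (v/2)) + 1, by omega⟩) = ⟨v, by omega⟩
  rw [dif_pos (by omega)]
  exact Fin.ext (by simp only [Fin.val_mk]; omega)

lemma st_odd (v : ℕ) (hv : v ≤ n) (h2 : v % 2 = 1) (h' : n - v/2 < n+1) :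
    sigmaTilde (n+1) ⟨n - v/2, h'⟩ = ⟨v, by omega⟩ := by
  show (if h : 2 * (n - v/2) < n+1 then (⟨2*(n - v/2), h⟩ : Fin (n+1))
    else ⟨2 * ((n+1) - 1 - (n - v/2)) + 1, by omega⟩) = ⟨v, by omega⟩
  rw [dif_neg (by omega)]
  exact Fin.ext (by simp only [Fin.val_mk]; omega)

lemma X_add_one (v : ℕ) (hv : v ≤ n) :
    X n v + 1 = ⟨if v % 2 = 0 then v/2 else n - v/2, by split_ifs <;> omega⟩ := by
  rcases Nat.even_or_odd v with he | ho
  · have h2 : v % 2 = 0 := Nat.even_iff.mp he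
    rcases Nat.eq_zero_or_pos v with rfl | hpos
    · have hX : X n 0 = ⟨n, by omega⟩ := Fin.ext (by
        simp only [Fin.val_mk]; rw [X_val (by omega)]; unfold xv; simp)
      rw [hX, mk_top_add_one]
      exact Fin.ext (by simp only [Fin.val_mk]; split_ifs <;> omega)
    · have hX : X n v = ⟨v/2 - 1, by omega⟩ := Fin.ext (by
        simp only [Fin.val_mk]; rw [X_val (by omega)]; unfold xv
        split_ifs <;> (try contradiction) <;> omega)
      rw [hX, mk_add_one (n := n) (a := v/2 - 1) (by omega)]
      exact Fin.ext (by simp only [Fin.val_mk]; split_ifs <;> omega)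
  · have h2 : v % 2 = 1 := Nat.odd_iff.mp ho
    have hX : X n v = ⟨n - 1 - v/2, by omega⟩ := Fin.ext (by
      simp only [Fin.val_mk]; rw [X_val (by omega)]; unfold xv
      split_ifs <;> (try contradiction) <;> omega)
    rw [hX, mk_add_one (n := n) (a := n - 1 - v/2) (by omega)]
    exact Fin.ext (by simp only [Fin.val_mk]; split_ifs <;> omega)

lemma rev_Y (v : ℕ) (hv : v ≤ n) :
    Fin.rev (Y n v) = ⟨if v % 2 = 0 then v/2 else n - v/2, by split_ifs <;> omega⟩ := by
  apply Fin.ext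
  rw [Fin.val_rev, Y_val hv]
  simp only [Fin.val_mk]
  unfold yv
  split_ifs <;> (try contradiction) <;> omega

lemma sigmaTilde_eval (v : ℕ) (hv : v ≤ n) :
    sigmaTilde (n+1) (X n v + 1) = ⟨v, by omega⟩ := by
  rw [X_add_one v hv]
  rcases Nat.even_or_odd v with he | ho
  · have h2 : v % 2 = 0 := Nat.even_iff.mp he
    have : (⟨if v % 2 = 0 then v/2 else n - v/2, by split_ifs <;> omega⟩ : Fin (n+1))
        = ⟨v/2, by omega⟩ := Fin.ext (by simp only [Fin.val_mk]; rw [if_pos h2])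
    rw [this]
    exact st_even v hv h2 _
  · have h2 : v % 2 = 1 := Nat.odd_iff.mp ho
    have : (⟨if v % 2 = 0 then v/2 else n - v/2, by split_ifs <;> omega⟩ : Fin (n+1))
        = ⟨n - v/2, by omega⟩ := Fin.ext (by simp only [Fin.val_mk]; rw [if_neg (by omega)])
    rw [this]
    exact st_odd v hv h2 _

lemma piTilde_eval (v : ℕ) (hv : v ≤ n) :
    piTilde (n+1) (Y n v) = ⟨v, by omega⟩ := by
  show sigmaTilde (n+1) (Fin.revPerm (Y n v)) = _
  rw [Fin.revPerm_apply, rev_Y v hv]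
  rcases Nat.even_or_odd v with he | ho
  · have h2 : v % 2 = 0 := Nat.even_iff.mp he
    have : (⟨if v % 2 = 0 then v/2 else n - v/2, by split_ifs <;> omega⟩ : Fin (n+1))
        = ⟨v/2, by omega⟩ := Fin.ext (by simp only [Fin.val_mk]; rw [if_pos h2])
    rw [this]
    exact st_even v hv h2 _
  · have h2 : v % 2 = 1 := Nat.odd_iff.mp ho
    have : (⟨if v % 2 = 0 then v/2 else n - v/2, by split_ifs <;> omega⟩ : Fin (n+1))
        = ⟨n - v/2, by omega⟩ := Fin.ext (by simp only [Fin.val_mk]; rw [if_neg (by omega)])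
    rw [this]
    exact st_odd v hv h2 _

lemma mainlem (n : ℕ) (σ π : Equiv.Perm (Fin (n+1)))
    (hσ1 : σ 0 = 0) (hπl : π (Fin.last n) = 0)
    (h1 : ∀ i j : Fin (n+1),
      (((σ (finRotate (n+1) j)).val : ℤ) - ((σ i).val : ℤ)) *
        (((π j).val : ℤ) - ((π i).val : ℤ)) ≥ 0)
    (h2 : ∀ i j : Fin (n+1),
      (((σ j).val : ℤ) - ((σ i).val : ℤ)) *
        (((π j).val : ℤ) - ((π ((finRotate (n+1))⁻¹ i)).val : ℤ)) ≥ 0) :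
    σ = sigmaTilde (n+1) ∧ π = piTilde (n+1) := by
  have hcbij : Function.Bijective (fun j : Fin (n+1) => σ (j + 1)) := by
    have h := (Equiv.addRight (1 : Fin (n+1))).bijective
    exact σ.bijective.comp h
  have hc0 : (fun j : Fin (n+1) => σ (j + 1)) (Fin.last n) = 0 := by
    show σ (Fin.last n + 1) = 0
    rw [Fin.last_add_one]; exact hσ1
  have H1 : ∀ i j : Fin (n+1),
      (((σ (j+1)).val : ℤ) - ((σ (i+1)).val : ℤ)) *
        (((π j).val : ℤ) - ((π (i+1)).val : ℤ)) ≥ 0 := by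
    intro i j
    have h := h1 (i+1) j
    rwa [finRotate_succ_apply] at h
  have H2 : ∀ i j : Fin (n+1),
      (((σ (j+1)).val : ℤ) - ((σ (i+1)).val : ℤ)) *
        (((π (j+1)).val : ℤ) - ((π i).val : ℤ)) ≥ 0 := by
    intro i j
    have h := h2 (i+1) (j+1)
    have hri : (finRotate (n+1))⁻¹ (i+1) = i := by
      rw [← finRotate_succ_apply (i := i)]
      exact Equiv.symm_apply_apply _ _
    rwa [hri] at h
  have hkey := key (c := fun j : Fin (n+1) => σ (j + 1)) (b := fun j => π j)
      hcbij π.bijective hc0 hπl H1 H2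
  constructor
  · have hsymm : σ.symm = (sigmaTilde (n+1)).symm := by
      apply Equiv.ext
      intro u
      have hu : u.val ≤ n := by omega
      have h1' : σ (X n u.val + 1) = u := by
        have := (hkey u.val hu).1
        exact Fin.ext this
      have h2' : sigmaTilde (n+1) (X n u.val + 1) = u := by
        rw [sigmaTilde_eval u.val hu]
      have e1 : σ.symm u = X n u.val + 1 := by
        apply σ.injective; rw [Equiv.apply_symm_apply, h1']
      have e2 : (sigmaTilde (n+1)).symm u = X n u.val + 1 := by
        apply (sigmaTilde (n+1)).injective; rw [Equiv.apply_symm_apply, h2']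
      rw [e1, e2]
    rw [← Equiv.symm_symm σ, hsymm, Equiv.symm_symm]
  · have hsymm : π.symm = (piTilde (n+1)).symm := by
      apply Equiv.ext
      intro u
      have hu : u.val ≤ n := by omega
      have h1' : π (Y n u.val) = u := by
        have := (hkey u.val hu).2
        exact Fin.ext this
      have h2' : piTilde (n+1) (Y n u.val) = u := by
        rw [piTilde_eval u.val hu]
      have e1 : π.symm u = Y n u.val := by
        apply π.injective; rw [Equiv.apply_symm_apply, h1']
      have e2 : (piTilde (n+1)).symm u = Y n u.val := by
        apply (piTilde (n+1)).injective; rw [Equiv.apply_symm_apply, h2']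
      rw [e1, e2]
    rw [← Equiv.symm_symm π, hsymm, Equiv.symm_symm]

end CrissCrossAux
end Part3

section Part4
namespace CrissCrossAux

variable {n : ℕ}

lemma rotA (j : Fin (n+1)) :
    finRotate (n+1) (Fin.rev (finRotate (n+1) j)) = Fin.rev j := by
  rw [finRotate_succ_apply, finRotate_succ_apply, Fin.rev_add, sub_add_cancel]

lemma rotB (i : Fin (n+1)) :
    Fin.rev ((finRotate (n+1))⁻¹ i) = finRotate (n+1) (Fin.rev i) := by
  have hinv : (finRotate (n+1))⁻¹ i = i - 1 := by
    apply (finRotate (n+1)).injective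
    rw [Equiv.Perm.inv_def, Equiv.apply_symm_apply, finRotate_succ_apply, sub_add_cancel]
  have h2 : Fin.rev (Fin.rev i + 1) = i - 1 := by rw [Fin.rev_add, Fin.rev_rev]
  rw [hinv, finRotate_succ_apply, ← h2, Fin.rev_rev]

end CrissCrossAux
end Part4

open CrissCrossAux

/-- **Characterization of cycles with no badly oriented pair.**  Let `N ≥ 1` and let
`σ, π ∈ S_N` with `σ(1) = 1` (0-indexed: `σ 0 = 0`) be such that no pair of couples has
opposite orientation: for all `i, j`, `(σ(τ(j)) − σ(i))·(π(j) − π(i)) ≥ 0` and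
`(σ(j) − σ(i))·(π(j) − π(τ⁻¹(i))) ≥ 0`, where `τ = finRotate N` is the left rotation.
Then `(σ,π)` is the criss-cross pair `(σ̃,π̃)` or its dual `(σ̃∘τ∘I, π̃∘I)`,
`I = Fin.revPerm` being the inversion. -/
theorem crisscross_characterization (N : ℕ) (hN : 1 ≤ N) (σ π : Equiv.Perm (Fin N))
    (hσ1 : σ ⟨0, hN⟩ = ⟨0, hN⟩)
    (h1 : ∀ i j : Fin N,
      (((σ (finRotate N j)).val : ℤ) - ((σ i).val : ℤ)) *
        (((π j).val : ℤ) - ((π i).val : ℤ)) ≥ 0)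
    (h2 : ∀ i j : Fin N,
      (((σ j).val : ℤ) - ((σ i).val : ℤ)) *
        (((π j).val : ℤ) - ((π ((finRotate N)⁻¹ i)).val : ℤ)) ≥ 0) :
    (σ = sigmaTilde N ∧ π = piTilde N) ∨
    (σ = sigmaTilde N * finRotate N * Fin.revPerm ∧ π = piTilde N * Fin.revPerm) := by
  obtain ⟨n, rfl⟩ : ∃ n, N = n + 1 := ⟨N - 1, by omega⟩
  have hσ0 : σ 0 = 0 := hσ1
  obtain ⟨m, hm⟩ := π.surjective 0
  have hdich : π (Fin.last n) = 0 ∨ π 0 = 0 := by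
    have hd := h1 0 m
    rw [hm, hσ0] at hd
    simp only [Fin.val_zero, Nat.cast_zero] at hd
    by_cases hs : (σ (finRotate (n+1) m)).val = 0
    · left
      have h0 : σ (finRotate (n+1) m) = 0 := Fin.ext (by rw [hs, Fin.val_zero])
      have hz : finRotate (n+1) m = 0 := σ.injective (by rw [h0, hσ0])
      rw [finRotate_succ_apply] at hz
      have hm' : m = Fin.last n := by
        apply add_right_cancel (b := (1 : Fin (n+1)))
        rw [hz, Fin.last_add_one]
      rw [← hm']; exact hm
    · right
      have hps : (π 0).val = 0 := by
        by_contra hp0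
        have hσpos : (0:ℤ) < ((σ (finRotate (n+1) m)).val : ℤ) := by omega
        have hπpos : (0:ℤ) < ((π 0).val : ℤ) := by omega
        nlinarith [hd, mul_pos hσpos hπpos]
      exact Fin.ext (by rw [hps, Fin.val_zero])
  rcases hdich with hL | hR
  · exact Or.inl (mainlem n σ π hσ0 hL h1 h2)
  · right
    have h1' : ∀ i j : Fin (n+1),
        (((((σ * finRotate (n+1) * Fin.revPerm : Equiv.Perm (Fin (n+1)))) (finRotate (n+1) j)).val : ℤ) -
          ((((σ * finRotate (n+1) * Fin.revPerm : Equiv.Perm (Fin (n+1)))) i).val : ℤ)) *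
        (((((π * Fin.revPerm : Equiv.Perm (Fin (n+1)))) j).val : ℤ) - ((((π * Fin.revPerm : Equiv.Perm (Fin (n+1)))) i).val : ℤ)) ≥ 0 := by
      intro i j
      have h := h2 (finRotate (n+1) (Fin.rev i)) (Fin.rev j)
      rw [Equiv.Perm.inv_def, Equiv.symm_apply_apply] at h
      simp only [Equiv.Perm.mul_apply, Fin.revPerm_apply]
      rw [rotA j]
      exact h
    have h2' : ∀ i j : Fin (n+1),
        (((((σ * finRotate (n+1) * Fin.revPerm : Equiv.Perm (Fin (n+1)))) j).val : ℤ) -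
          ((((σ * finRotate (n+1) * Fin.revPerm : Equiv.Perm (Fin (n+1)))) i).val : ℤ)) *
        (((((π * Fin.revPerm : Equiv.Perm (Fin (n+1)))) j).val : ℤ) -
          ((((π * Fin.revPerm : Equiv.Perm (Fin (n+1)))) ((finRotate (n+1))⁻¹ i)).val : ℤ)) ≥ 0 := by
      intro i j
      have h := h1 (finRotate (n+1) (Fin.rev i)) (Fin.rev j)
      simp only [Equiv.Perm.mul_apply, Fin.revPerm_apply]
      rw [rotB i]
      exact h
    have hσ'0 : ((σ * finRotate (n+1) * Fin.revPerm : Equiv.Perm (Fin (n+1)))) 0 = 0 := by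
      simp only [Equiv.Perm.mul_apply, Fin.revPerm_apply, Fin.rev_zero]
      rw [finRotate_succ_apply, Fin.last_add_one]
      exact hσ0
    have hπ'l : ((π * Fin.revPerm : Equiv.Perm (Fin (n+1)))) (Fin.last n) = 0 := by
      simp only [Equiv.Perm.mul_apply, Fin.revPerm_apply, Fin.rev_last]
      exact hR
    obtain ⟨hres1, hres2⟩ := mainlem n (σ * finRotate (n+1) * Fin.revPerm)
      (π * Fin.revPerm) hσ'0 hπ'l h1' h2'
    have hIinv : (Fin.revPerm : Equiv.Perm (Fin (n+1)))⁻¹ = Fin.revPerm := by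
      rw [Equiv.Perm.inv_def, Fin.revPerm_symm]
    constructor
    · have hinvol : ((finRotate (n+1) : Equiv.Perm (Fin (n+1))) * Fin.revPerm) *
          (finRotate (n+1) * Fin.revPerm) = 1 := by
        apply Equiv.ext
        intro x
        simp only [Equiv.Perm.mul_apply, Fin.revPerm_apply, Equiv.Perm.one_apply]
        rw [rotA (Fin.rev x), Fin.rev_rev]
      have hstep : σ * (finRotate (n+1) * Fin.revPerm) = sigmaTilde (n+1) := by
        rw [← mul_assoc]; exact hres1
      have hinv2 : ((finRotate (n+1) : Equiv.Perm (Fin (n+1))) * Fin.revPerm)⁻¹ =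
          finRotate (n+1) * Fin.revPerm := inv_eq_of_mul_eq_one_right hinvol
      calc σ = sigmaTilde (n+1) * (finRotate (n+1) * Fin.revPerm)⁻¹ :=
              eq_mul_inv_of_mul_eq hstep
        _ = sigmaTilde (n+1) * (finRotate (n+1) * Fin.revPerm) := by rw [hinv2]
        _ = sigmaTilde (n+1) * finRotate (n+1) * Fin.revPerm := by rw [mul_assoc]
    · calc π = piTilde (n+1) * (Fin.revPerm : Equiv.Perm (Fin (n+1)))⁻¹ :=
              eq_mul_inv_of_mul_eq hres2
        _ = piTilde (n+1) * Fin.revPerm := by rw [hIinv]
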